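/- Suppose F is a CDF on ℝ and the Huber functional H^α_{a,b}(F) equals [c, d] with c < d. Then there exists w ∈ (0,1) such that F(t) = w for all t in the open interval (c − b, d + a), and α = b·w / (b·w + a·(1 − w)). -/

import Mathlib

open Set MeasureTheory Filter Topology

set_option maxHeartbeats 1000000 in
/-- If the Huber functional of a CDF `F` is a nondegenerate interval `[c,d]`, then `F` is
constant, with value `w`, on `(c−b, d+a)`, and `α = bw/(bw + a(1−w))`. -/
theorem stmt6 (a b α c d : ℝ) (ha : 0 < a) (hb : 0 < b) (hα : α ∈ Set.Ioo (0 : ℝ) 1)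
    (F : ℝ → ℝ) (hmono : Monotone F) (h0 : ∀ t, 0 ≤ F t) (h1 : ∀ t, F t ≤ 1)
    (hrc : ∀ x, ContinuousWithinAt F (Set.Ici x) x)
    (hbot : Tendsto F atBot (nhds 0)) (htop : Tendsto F atTop (nhds 1))
    (hcd : c < d)
    (hH : {x : ℝ | α * ∫ t in x..(x + a), (1 - F t)
        = (1 - α) * ∫ t in (x - b)..x, F t} = Set.Icc c d) :
    ∃ w ∈ Set.Ioo (0 : ℝ) 1, (∀ t ∈ Set.Ioo (c - b) (d + a), F t = w) ∧
      α = b * w / (b * w + a * (1 - w)) := by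
  obtain ⟨hα0, hα1⟩ := hα
  have hα1' : (0:ℝ) < 1 - α := by linarith
  have hanti : Antitone (fun t => 1 - F t) := fun u v h => by
    simpa using sub_le_sub_left (hmono h) 1
  have heq : ∀ x ∈ Set.Icc c d, α * ∫ t in x..(x + a), (1 - F t)
      = (1 - α) * ∫ t in (x - b)..x, F t := by
    intro x hx
    rw [← hH] at hx
    exact hx
  have iF : ∀ u v : ℝ, IntervalIntegrable F volume u v := fun u v =>
    hmono.intervalIntegrable
  have iG : ∀ u v : ℝ, IntervalIntegrable (fun t => 1 - F t) volume u v := fun u v =>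
    hanti.intervalIntegrable
  -- monotone bounds on interval integrals
  have intF_le : ∀ u v : ℝ, u ≤ v → ∫ t in u..v, F t ≤ (v - u) * F v := by
    intro u v huv
    have h := intervalIntegral.integral_mono_on huv (iF u v)
      (intervalIntegrable_const (c := F v)) (fun t ht => hmono ht.2)
    rw [intervalIntegral.integral_const, smul_eq_mul] at h
    linarith
  have intF_ge : ∀ u v : ℝ, u ≤ v → (v - u) * F u ≤ ∫ t in u..v, F t := by
    intro u v huv
    have h := intervalIntegral.integral_mono_on huv
      (intervalIntegrable_const (c := F u)) (iF u v) (fun t ht => hmono ht.1)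
    rw [intervalIntegral.integral_const, smul_eq_mul] at h
    linarith
  have intG_le : ∀ u v : ℝ, u ≤ v → ∫ t in u..v, (1 - F t) ≤ (v - u) * (1 - F u) := by
    intro u v huv
    have h := intervalIntegral.integral_mono_on huv (iG u v)
      (intervalIntegrable_const (c := 1 - F u)) (fun t ht => hanti ht.1)
    rw [intervalIntegral.integral_const, smul_eq_mul] at h
    linarith
  have intG_ge : ∀ u v : ℝ, u ≤ v → (v - u) * (1 - F v) ≤ ∫ t in u..v, (1 - F t) := by
    intro u v huv
    have h := intervalIntegral.integral_mono_on huv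
      (intervalIntegrable_const (c := 1 - F v)) (iG u v) (fun t ht => hanti ht.2)
    rw [intervalIntegral.integral_const, smul_eq_mul] at h
    linarith
  -- right limits
  have tendsto_right : ∀ y : ℝ, Tendsto (fun h : ℝ => F (y + h)) (𝓝[>] (0:ℝ)) (𝓝 (F y)) := by
    intro y
    have h1 : Tendsto (fun h : ℝ => y + h) (𝓝[>] (0:ℝ)) (𝓝[Set.Ici y] y) := by
      apply tendsto_nhdsWithin_of_tendsto_nhds_of_eventually_within
      · have : Tendsto (fun h : ℝ => y + h) (𝓝 (0:ℝ)) (𝓝 (y + 0)) :=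
          (continuous_const.add continuous_id).tendsto 0
        simpa using this.mono_left nhdsWithin_le_nhds
      · filter_upwards [self_mem_nhdsWithin] with h hh
        exact le_add_of_nonneg_right (le_of_lt (Set.mem_Ioi.mp hh))
    exact Filter.Tendsto.comp (hrc y) h1
  -- key: F is flat of width a to the right and b to the left, at every x ∈ [c,d)
  have key : ∀ x, c ≤ x → x < d → F (x - b) = F x ∧ F (x + a) = F x := by
    intro x hcx hxd
    have step : ∀ h : ℝ, 0 < h → x + h ≤ d →
        α * (1 - F (x + h)) + (1 - α) * F x ≤
        α * (1 - F (x + a)) + (1 - α) * F (x - b + h) := by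
      intro h hh hhd
      have E1 := heq x ⟨hcx, hxd.le⟩
      have E2 := heq (x + h) ⟨by linarith, hhd⟩
      have E2' : α * ∫ t in (x+h)..(x+a+h), (1 - F t)
          = (1 - α) * ∫ t in (x-b+h)..(x+h), F t := by
        rw [show x+a+h = (x+h)+a by ring, show x-b+h = (x+h)-b by ring]
        exact E2
      have A1 := intervalIntegral.integral_add_adjacent_intervals
        (iF (x-b) (x-b+h)) (iF (x-b+h) (x+h))
      have A2 := intervalIntegral.integral_add_adjacent_intervals (iF (x-b) x) (iF x (x+h))
      have B1 := intervalIntegral.integral_add_adjacent_intervals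
        (iG x (x+h)) (iG (x+h) (x+a+h))
      have B2 := intervalIntegral.integral_add_adjacent_intervals
        (iG x (x+a)) (iG (x+a) (x+a+h))
      have hsum : α * (∫ t in (x+a)..(x+a+h), (1 - F t))
            + (1-α) * (∫ t in (x-b)..(x-b+h), F t)
          = α * (∫ t in x..(x+h), (1 - F t)) + (1-α) * (∫ t in x..(x+h), F t) := by
        linear_combination E2' - E1 + α * B2 - α * B1 + (1-α) * A1 - (1-α) * A2
      have hK2 : ∫ t in (x+a)..(x+a+h), (1 - F t) ≤ h * (1 - F (x+a)) := by
        have := intG_le (x+a) (x+a+h) (by linarith)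
        linarith [this]
      have hI2 : ∫ t in (x-b)..(x-b+h), F t ≤ h * F (x-b+h) := by
        have := intF_le (x-b) (x-b+h) (by linarith)
        linarith [this]
      have hK1 : h * (1 - F (x+h)) ≤ ∫ t in x..(x+h), (1 - F t) := by
        have := intG_ge x (x+h) (by linarith)
        linarith [this]
      have hI1 : h * F x ≤ ∫ t in x..(x+h), F t := by
        have := intF_ge x (x+h) (by linarith)
        linarith [this]
      have m1 := mul_le_mul_of_nonneg_left hK2 hα0.le
      have m2 := mul_le_mul_of_nonneg_left hI2 hα1'.le
      have m3 := mul_le_mul_of_nonneg_left hK1 hα0.le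
      have m4 := mul_le_mul_of_nonneg_left hI1 hα1'.le
      have hmul : h * (α * (1 - F (x + h)) + (1 - α) * F x)
          ≤ h * (α * (1 - F (x + a)) + (1 - α) * F (x - b + h)) := by
        linarith [hsum, m1, m2, m3, m4]
      exact le_of_mul_le_mul_left hmul hh
    have hlim : α * (1 - F x) + (1 - α) * F x
        ≤ α * (1 - F (x + a)) + (1 - α) * F (x - b) := by
      have hev : ∀ᶠ h in 𝓝[>] (0:ℝ),
          α * (1 - F (x + h)) + (1 - α) * F x
            ≤ α * (1 - F (x + a)) + (1 - α) * F (x - b + h) := by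
        filter_upwards [Ioc_mem_nhdsGT (show (0:ℝ) < d - x by linarith)]
          with h hh
        exact step h hh.1 (by linarith [hh.2])
      refine le_of_tendsto_of_tendsto ?_ ?_ hev
      · exact ((tendsto_const_nhds.sub (tendsto_right x)).const_mul α).add tendsto_const_nhds
      · exact tendsto_const_nhds.add ((tendsto_right (x - b)).const_mul (1 - α))
    have hba : F (x - b) ≤ F x := hmono (by linarith)
    have hxa : F x ≤ F (x + a) := hmono (by linarith)
    have h2 : F (x + a) = F x := by
      by_contra hne
      have hlt : F x < F (x + a) := lt_of_le_of_ne hxa (fun e => hne e.symm)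
      nlinarith [mul_nonneg hα1'.le (sub_nonneg.2 hba), mul_pos hα0 (sub_pos.2 hlt)]
    have h3 : F (x - b) = F x := by
      by_contra hne
      have hlt : F (x - b) < F x := lt_of_le_of_ne hba hne
      nlinarith [mul_pos hα1' (sub_pos.2 hlt), h2]
    exact ⟨h3, h2⟩
  -- F is constant = F c on [c, d)
  have hchain : ∀ n : ℕ, ∀ t, c ≤ t → t < d → t ≤ c + n * b → F t = F c := by
    intro n
    induction n with
    | zero =>
      intro t h1' h2' h3'
      norm_num at h3'
      rw [le_antisymm h3' h1']
    | succ n ih =>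
      intro t h1' h2' h3'
      have hk := (key t h1' h2').1
      by_cases hc : t - b ≤ c
      · have u1 : F (t - b) ≤ F c := hmono hc
        have u2 : F c ≤ F t := hmono h1'
        linarith
      · push_neg at hc
        rw [← hk]
        refine ih (t - b) (by linarith) (by linarith) ?_
        push_cast at h3' ⊢
        linarith
  have hconst : ∀ t, c ≤ t → t < d → F t = F c := by
    intro t h1' h2'
    obtain ⟨n, hn⟩ := exists_nat_ge ((t - c) / b)
    refine hchain n t h1' h2' ?_
    rw [div_le_iff₀ hb] at hn
    linarith
  have hcb : F (c - b) = F c := (key c le_rfl hcd).1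
  have hca : F (c + a) = F c := (key c le_rfl hcd).2
  -- F constant on (c-b, d+a)
  have hw : ∀ t, c - b < t → t < d + a → F t = F c := by
    intro t ht1 ht2
    rcases lt_or_ge t c with h | h
    · have u1 : F (c - b) ≤ F t := hmono (by linarith)
      have u2 : F t ≤ F c := hmono h.le
      linarith
    rcases lt_or_ge t d with h' | h'
    · exact hconst t h h'
    rcases lt_or_ge (t - a) c with h'' | h''
    · have u1 : F c ≤ F t := hmono (by linarith)
      have u2 : F t ≤ F (c + a) := hmono (by linarith)
      linarith
    · have hx : t - a < d := by linarith
      have h2a := (key (t - a) h'' hx).2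
      rw [show t - a + a = t by ring] at h2a
      rw [h2a]
      exact hconst _ h'' hx
  -- compute the two integrals at x = c
  have hIb : ∫ t in (c-b)..c, F t = b * F c := by
    have hcongr : Set.EqOn F (fun _ => F c) (Set.uIcc (c-b) c) := by
      intro t ht
      rw [Set.uIcc_of_le (by linarith)] at ht
      have u1 : F (c - b) ≤ F t := hmono ht.1
      have u2 : F t ≤ F c := hmono ht.2
      simp only
      linarith
    rw [intervalIntegral.integral_congr hcongr, intervalIntegral.integral_const,
      smul_eq_mul]
    ring
  have hIa : ∫ t in c..(c+a), (1 - F t) = a * (1 - F c) := by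
    have hcongr : Set.EqOn (fun t => 1 - F t) (fun _ => 1 - F c) (Set.uIcc c (c+a)) := by
      intro t ht
      rw [Set.uIcc_of_le (by linarith)] at ht
      have u1 : F c ≤ F t := hmono ht.1
      have u2 : F t ≤ F (c + a) := hmono ht.2
      simp only
      linarith
    rw [intervalIntegral.integral_congr hcongr, intervalIntegral.integral_const,
      smul_eq_mul]
    ring
  have heqc := heq c ⟨le_rfl, hcd.le⟩
  rw [hIa, hIb] at heqc
  set w := F c with hwdef
  have hw0 : 0 < w := by
    nlinarith [mul_pos hα0 ha, mul_pos hα1' hb, h0 c, h1 c]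
  have hw1 : w < 1 := by
    nlinarith [mul_pos hα0 ha, mul_pos hα1' hb, h0 c, h1 c]
  refine ⟨w, ⟨hw0, hw1⟩, fun t ht => hw t ht.1 ht.2, ?_⟩
  have hD : 0 < b * w + a * (1 - w) := by nlinarith
  rw [eq_div_iff (ne_of_gt hD)]
  nlinarith [heqc]
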